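/- For every positive integer n and every T ⊆ [n-1], the polynomial A^T_n(x) is log-concave and unimodal. -/

import Mathlib

open Polynomial

open scoped Classical

noncomputable section

/-- The descent set of a permutation `w` of `Fin n`, recorded as a subset of
`{1, ..., n-1}` (1-based positions, as in the paper: `i ∈ Des(w)` iff `w(i) > w(i+1)`). -/
def descSet {n : ℕ} (w : Equiv.Perm (Fin n)) : Finset ℕ :=
  (Finset.univ.filter (fun i : Fin (n - 1) =>
      w ⟨i.val + 1, by have := i.isLt; omega⟩ < w ⟨i.val, by have := i.isLt; omega⟩)).image
    (fun i => i.val + 1)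

/-- `A^T_n(x) = Σ_{w ∈ S_n, Des(w) ⊆ T} x^{des(w)}` (note `Des(w) ⊆ {1,...,n-1}`
automatically, so this also realizes the convention `A^T_n := A^{T ∩ [n-1]}_n`). -/
def Apoly (n : ℕ) (T : Finset ℕ) : Polynomial ℝ :=
  ∑ w ∈ Finset.univ.filter (fun w : Equiv.Perm (Fin n) => descSet w ⊆ T),
    X ^ (descSet w).card

/-- `p^T_{n,k}(x) = Σ x^{des(w)}` over permutations `w ∈ S_{n+1}` with `w(1) = k+1`
(0-based: `w 0 = k`) and `Des(w) ⊆ T`. -/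
def ppoly (n k : ℕ) (T : Finset ℕ) : Polynomial ℝ :=
  ∑ w ∈ Finset.univ.filter (fun w : Equiv.Perm (Fin (n + 1)) =>
      (w 0 : ℕ) = k ∧ descSet w ⊆ T),
    X ^ (descSet w).card

/-- A real polynomial has only real roots (or is identically zero). -/
def RealRooted (p : Polynomial ℝ) : Prop :=
  p = 0 ∨ ∀ z : ℂ, Polynomial.aeval z p = 0 → z.im = 0

/-- The list of real roots of `p`, with multiplicity, in decreasing order. -/
def rootsDesc (p : Polynomial ℝ) : List ℝ :=
  (p.roots.sort (· ≤ ·)).reverse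

/-- `Interlaces p q` means `p ⪯ q`: both are real-rooted and, listing the roots of `p`
as `α_1 ≥ α_2 ≥ ⋯` and those of `q` as `β_1 ≥ β_2 ≥ ⋯`, one has
`⋯ ≤ α_2 ≤ β_2 ≤ α_1 ≤ β_1`; by convention the zero polynomial interlaces and is
interlaced by every real-rooted polynomial. -/
def Interlaces (p q : Polynomial ℝ) : Prop :=
  (p = 0 ∧ RealRooted q) ∨ (q = 0 ∧ RealRooted p) ∨
  (RealRooted p ∧ RealRooted q ∧
    Multiset.card q.roots ≤ Multiset.card p.roots + 1 ∧
    Multiset.card p.roots ≤ Multiset.card q.roots ∧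
    (∀ (i : ℕ) (hp : i < (rootsDesc p).length) (hq : i < (rootsDesc q).length),
      (rootsDesc p).get ⟨i, hp⟩ ≤ (rootsDesc q).get ⟨i, hq⟩) ∧
    (∀ (i : ℕ) (hq : i + 1 < (rootsDesc q).length) (hp : i < (rootsDesc p).length),
      (rootsDesc q).get ⟨i + 1, hq⟩ ≤ (rootsDesc p).get ⟨i, hp⟩))

/-- The coefficient sequence of `p` is log-concave: `h_{i-1}·h_{i+1} ≤ h_i²`. -/
def CoeffLogConcave (p : Polynomial ℝ) : Prop :=
  ∀ i : ℕ, 1 ≤ i → p.coeff (i - 1) * p.coeff (i + 1) ≤ p.coeff i ^ 2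

/-- The coefficient sequence of `p` is unimodal: for some peak position `k`,
`h_0 ≤ h_1 ≤ ⋯ ≤ h_k ≥ h_{k+1} ≥ ⋯`. -/
def CoeffUnimodal (p : Polynomial ℝ) : Prop :=
  ∃ k : ℕ, (∀ i : ℕ, i < k → p.coeff i ≤ p.coeff (i + 1)) ∧
    (∀ i : ℕ, k ≤ i → p.coeff (i + 1) ≤ p.coeff i)

namespace Stmt5Aux

open Finset Equiv

/-! ### Abstract closure of the invariants I1 (two-row log-concavity) and I2 (TP2). -/

/-- Weight used in the recursion: tail entries taken at level `α`, head entries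
at level `α-1` scaled by `ε`. -/
def W (N : ℕ → ℤ → ℝ) (ε : ℝ) (k : ℕ) (α : ℤ) (i : ℕ) : ℝ :=
  if k ≤ i then N i α else ε * N i (α - 1)

def Gop (N : ℕ → ℤ → ℝ) (ε : ℝ) (m : ℕ) (k : ℕ) (j : ℤ) : ℝ :=
  ∑ i ∈ Finset.range m, W N ε k j i

lemma sum_pair_le (R : Finset ℕ) (u v : ℕ → ℕ → ℝ)
    (h : ∀ i ∈ R, ∀ i' ∈ R, u i i' + u i' i ≤ v i i' + v i' i) :
    (∑ i ∈ R, ∑ i' ∈ R, u i i') ≤ ∑ i ∈ R, ∑ i' ∈ R, v i i' := by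
  have hu : (∑ i ∈ R, ∑ i' ∈ R, (u i i' + u i' i))
      = (∑ i ∈ R, ∑ i' ∈ R, u i i') + (∑ i ∈ R, ∑ i' ∈ R, u i' i) := by
    rw [← Finset.sum_add_distrib]
    exact Finset.sum_congr rfl fun i _ => by rw [← Finset.sum_add_distrib]
  have hu2 : (∑ i ∈ R, ∑ i' ∈ R, u i' i) = (∑ i ∈ R, ∑ i' ∈ R, u i i') := Finset.sum_comm
  have hv : (∑ i ∈ R, ∑ i' ∈ R, (v i i' + v i' i))
      = (∑ i ∈ R, ∑ i' ∈ R, v i i') + (∑ i ∈ R, ∑ i' ∈ R, v i' i) := by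
    rw [← Finset.sum_add_distrib]
    exact Finset.sum_congr rfl fun i _ => by rw [← Finset.sum_add_distrib]
  have hv2 : (∑ i ∈ R, ∑ i' ∈ R, v i' i) = (∑ i ∈ R, ∑ i' ∈ R, v i i') := Finset.sum_comm
  have hle : (∑ i ∈ R, ∑ i' ∈ R, (u i i' + u i' i)) ≤ ∑ i ∈ R, ∑ i' ∈ R, (v i i' + v i' i) :=
    Finset.sum_le_sum fun i hi => Finset.sum_le_sum fun i' hi' => h i hi i' hi'
  linarith

section Key

variable {N : ℕ → ℤ → ℝ} {ε : ℝ} {i i' : ℕ}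

/-- Pointwise (symmetrized) inequality underpinning closure of I1. -/
lemma key1 (hε : 0 ≤ ε)
    (h11 : ∀ a b : ℤ, a + 1 ≤ b → N i a * N i' (b + 1) ≤ N i (a + 1) * N i' b)
    (h12 : ∀ a b : ℤ, a + 1 ≤ b → N i' a * N i (b + 1) ≤ N i' (a + 1) * N i b)
    (h2 : ∀ j : ℤ, N i (j + 1) * N i' j ≤ N i j * N i' (j + 1))
    (hii : i ≤ i') (k l : ℕ) (a b : ℤ) (hab : a + 1 ≤ b) :
    W N ε k a i * W N ε l (b + 1) i' + W N ε k a i' * W N ε l (b + 1) i ≤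
      W N ε k (a + 1) i * W N ε l b i' + W N ε k (a + 1) i' * W N ε l b i := by
  have hε2 : (0:ℝ) ≤ ε * ε := mul_nonneg hε hε
  have A0 := h11 a b hab
  have B0 := h12 a b hab
  have A1 := h11 (a - 1) b (by omega)
  have B1 := h12 (a - 1) b (by omega)
  rw [show a - 1 + 1 = a by ring] at A1 B1
  -- second-term helper: ε * (N i' a * N i b) ≤ ε * (N i' (a+1) * N i (b-1))
  have SEC : ε * (N i' a * N i b) ≤ ε * (N i' (a + 1) * N i (b - 1)) := by
    rcases eq_or_lt_of_le hab with hc | hc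
    · rw [← hc, show a + 1 - 1 = a by ring]
      have := h2 a
      have := mul_le_mul_of_nonneg_left this hε
      linarith
    · have B2 := h12 a (b - 1) (by omega)
      rw [show b - 1 + 1 = b by ring] at B2
      exact mul_le_mul_of_nonneg_left B2 hε
  have sA1 : ε * (N i (a - 1) * N i' (b + 1)) ≤ ε * (N i a * N i' b) :=
    mul_le_mul_of_nonneg_left A1 hε
  have sB1 : ε * (N i' (a - 1) * N i (b + 1)) ≤ ε * (N i' a * N i b) :=
    mul_le_mul_of_nonneg_left B1 hε
  unfold W
  by_cases hp : k ≤ i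
  · have hr : k ≤ i' := hp.trans hii
    by_cases hs : l ≤ i
    · have hq : l ≤ i' := hs.trans hii
      simp only [if_pos hp, if_pos hr, if_pos hs, if_pos hq, add_sub_cancel_right]
      linarith
    · by_cases hq : l ≤ i'
      · simp only [if_pos hp, if_pos hr, if_neg hs, if_pos hq, add_sub_cancel_right]
        nlinarith [SEC]
      · simp only [if_pos hp, if_pos hr, if_neg hs, if_neg hq, add_sub_cancel_right]
        -- ε(X_a Y_b + Y_a X_b) ≤ ε(X_{a+1}Y_{b-1} + Y_{a+1}X_{b-1})
        rcases eq_or_lt_of_le hab with hc | hc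
        · rw [← hc, show a + 1 - 1 = a by ring]
          nlinarith [le_refl (0:ℝ)]
        · have A2 := h11 a (b - 1) (by omega)
          have B2 := h12 a (b - 1) (by omega)
          rw [show b - 1 + 1 = b by ring] at A2 B2
          nlinarith [mul_le_mul_of_nonneg_left A2 hε, mul_le_mul_of_nonneg_left B2 hε]
  · by_cases hr : k ≤ i'
    · by_cases hs : l ≤ i
      · have hq : l ≤ i' := hs.trans hii
        simp only [if_neg hp, if_pos hr, if_pos hs, if_pos hq, add_sub_cancel_right]
        nlinarith [sA1]
      · by_cases hq : l ≤ i'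
        · simp only [if_neg hp, if_pos hr, if_neg hs, if_pos hq, add_sub_cancel_right]
          nlinarith [sA1, SEC]
        · simp only [if_neg hp, if_pos hr, if_neg hs, if_neg hq, add_sub_cancel_right]
          have A2 : ε * (ε * (N i (a - 1) * N i' b)) ≤ ε * (ε * (N i a * N i' (b - 1))) := by
            have t := h11 (a - 1) (b - 1) (by omega)
            rw [show a - 1 + 1 = a by ring, show b - 1 + 1 = b by ring] at t
            exact mul_le_mul_of_nonneg_left (mul_le_mul_of_nonneg_left t hε) hε
          nlinarith [A2, SEC]
    · have hp' : ¬ k ≤ i := hp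
      by_cases hs : l ≤ i
      · have hq : l ≤ i' := hs.trans hii
        simp only [if_neg hp, if_neg hr, if_pos hs, if_pos hq, add_sub_cancel_right]
        nlinarith [sA1, sB1]
      · by_cases hq : l ≤ i'
        · simp only [if_neg hp, if_neg hr, if_neg hs, if_pos hq, add_sub_cancel_right]
          have B2 : ε * (ε * (N i' (a - 1) * N i b)) ≤ ε * (ε * (N i' a * N i (b - 1))) := by
            have t := h12 (a - 1) (b - 1) (by omega)
            rw [show a - 1 + 1 = a by ring, show b - 1 + 1 = b by ring] at t
            exact mul_le_mul_of_nonneg_left (mul_le_mul_of_nonneg_left t hε) hε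
          nlinarith [sA1, B2]
        · simp only [if_neg hp, if_neg hr, if_neg hs, if_neg hq, add_sub_cancel_right]
          have A2 : ε * (ε * (N i (a - 1) * N i' b)) ≤ ε * (ε * (N i a * N i' (b - 1))) := by
            have t := h11 (a - 1) (b - 1) (by omega)
            rw [show a - 1 + 1 = a by ring, show b - 1 + 1 = b by ring] at t
            exact mul_le_mul_of_nonneg_left (mul_le_mul_of_nonneg_left t hε) hε
          have B2 : ε * (ε * (N i' (a - 1) * N i b)) ≤ ε * (ε * (N i' a * N i (b - 1))) := by
            have t := h12 (a - 1) (b - 1) (by omega)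
            rw [show a - 1 + 1 = a by ring, show b - 1 + 1 = b by ring] at t
            exact mul_le_mul_of_nonneg_left (mul_le_mul_of_nonneg_left t hε) hε
          nlinarith [A2, B2]

/-- Pointwise (symmetrized) inequality underpinning closure of I2. -/
lemma key2 (hε : 0 ≤ ε)
    (h11 : ∀ a b : ℤ, a + 1 ≤ b → N i a * N i' (b + 1) ≤ N i (a + 1) * N i' b)
    (h12 : ∀ a b : ℤ, a + 1 ≤ b → N i' a * N i (b + 1) ≤ N i' (a + 1) * N i b)
    (h2 : ∀ j : ℤ, N i (j + 1) * N i' j ≤ N i j * N i' (j + 1))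
    (hii : i ≤ i') (k l : ℕ) (hkl : k ≤ l) (j : ℤ) :
    W N ε k (j + 1) i * W N ε l j i' + W N ε k (j + 1) i' * W N ε l j i ≤
      W N ε k j i * W N ε l (j + 1) i' + W N ε k j i' * W N ε l (j + 1) i := by
  have A1 := h11 (j - 1) j (by omega)
  have B1 := h12 (j - 1) j (by omega)
  rw [show j - 1 + 1 = j by ring] at A1 B1
  have sA1 : ε * (N i (j - 1) * N i' (j + 1)) ≤ ε * (N i j * N i' j) :=
    mul_le_mul_of_nonneg_left A1 hε
  have sB1 : ε * (N i' (j - 1) * N i (j + 1)) ≤ ε * (N i' j * N i j) :=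
    mul_le_mul_of_nonneg_left B1 hε
  have C0 := h2 j
  have C1 := h2 (j - 1)
  rw [show j - 1 + 1 = j by ring] at C1
  have sC1 : ε * (ε * (N i j * N i' (j - 1))) ≤ ε * (ε * (N i (j - 1) * N i' j)) :=
    mul_le_mul_of_nonneg_left (mul_le_mul_of_nonneg_left C1 hε) hε
  unfold W
  by_cases hs : l ≤ i
  · have hp : k ≤ i := hkl.trans hs
    have hq : l ≤ i' := hs.trans hii
    have hr : k ≤ i' := hp.trans hii
    simp only [if_pos hp, if_pos hr, if_pos hs, if_pos hq, add_sub_cancel_right]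
    linarith
  · by_cases hp : k ≤ i
    · have hr : k ≤ i' := hp.trans hii
      by_cases hq : l ≤ i'
      · simp only [if_pos hp, if_pos hr, if_neg hs, if_pos hq, add_sub_cancel_right]
        nlinarith [sA1, C0]
      · simp only [if_pos hp, if_pos hr, if_neg hs, if_neg hq, add_sub_cancel_right]
        nlinarith [sA1, sB1]
    · by_cases hq : l ≤ i'
      · have hr : k ≤ i' := hkl.trans hq
        simp only [if_neg hp, if_pos hr, if_neg hs, if_pos hq, add_sub_cancel_right]
        nlinarith [le_refl (0:ℝ)]
      · by_cases hr : k ≤ i'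
        · simp only [if_neg hp, if_pos hr, if_neg hs, if_neg hq, add_sub_cancel_right]
          nlinarith [sC1, sA1]
        · simp only [if_neg hp, if_neg hr, if_neg hs, if_neg hq, add_sub_cancel_right]
          nlinarith [le_refl (0:ℝ)]

end Key

lemma closure1 (N : ℕ → ℤ → ℝ) (ε : ℝ) (m : ℕ) (hε : 0 ≤ ε)
    (hI1 : ∀ k l, k < m → l < m → ∀ a b : ℤ, a + 1 ≤ b →
      N k a * N l (b + 1) ≤ N k (a + 1) * N l b)
    (hI2 : ∀ k l, k < m → l < m → k ≤ l → ∀ j : ℤ,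
      N k (j + 1) * N l j ≤ N k j * N l (j + 1))
    (k l : ℕ) (a b : ℤ) (hab : a + 1 ≤ b) :
    Gop N ε m k a * Gop N ε m l (b + 1) ≤ Gop N ε m k (a + 1) * Gop N ε m l b := by
  unfold Gop
  rw [Finset.sum_mul_sum, Finset.sum_mul_sum]
  refine sum_pair_le _ _ _ fun i hi i' hi' => ?_
  have hi := Finset.mem_range.mp hi
  have hi' := Finset.mem_range.mp hi'
  rcases le_total i i' with h | h
  · exact key1 hε (hI1 i i' hi hi') (hI1 i' i hi' hi) (hI2 i i' hi hi' h) h k l a b hab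
  · have := key1 hε (hI1 i' i hi' hi) (hI1 i i' hi hi') (hI2 i' i hi' hi h) h k l a b hab
    linarith

lemma closure2 (N : ℕ → ℤ → ℝ) (ε : ℝ) (m : ℕ) (hε : 0 ≤ ε)
    (hI1 : ∀ k l, k < m → l < m → ∀ a b : ℤ, a + 1 ≤ b →
      N k a * N l (b + 1) ≤ N k (a + 1) * N l b)
    (hI2 : ∀ k l, k < m → l < m → k ≤ l → ∀ j : ℤ,
      N k (j + 1) * N l j ≤ N k j * N l (j + 1))
    (k l : ℕ) (hkl : k ≤ l) (j : ℤ) :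
    Gop N ε m k (j + 1) * Gop N ε m l j ≤ Gop N ε m k j * Gop N ε m l (j + 1) := by
  unfold Gop
  rw [Finset.sum_mul_sum, Finset.sum_mul_sum]
  refine sum_pair_le _ _ _ fun i hi i' hi' => ?_
  have hi := Finset.mem_range.mp hi
  have hi' := Finset.mem_range.mp hi'
  rcases le_total i i' with h | h
  · exact key2 hε (hI1 i i' hi hi') (hI1 i' i hi' hi) (hI2 i i' hi hi' h) h k l hkl j
  · have := key2 hε (hI1 i' i hi' hi) (hI1 i i' hi hi') (hI2 i' i hi' hi h) h k l hkl j
    linarith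


/-! ### Combinatorics of descent sets under first-entry insertion. -/

/-- The positions (0-based) of descents. -/
def dfilt {n : ℕ} (w : Equiv.Perm (Fin n)) : Finset (Fin (n - 1)) :=
  Finset.univ.filter (fun i : Fin (n - 1) =>
      w ⟨i.val + 1, by have := i.isLt; omega⟩ < w ⟨i.val, by have := i.isLt; omega⟩)

lemma descSet_eq {n : ℕ} (w : Equiv.Perm (Fin n)) :
    descSet w = (dfilt w).image (fun i => i.val + 1) := rfl

lemma card_descSet {n : ℕ} (w : Equiv.Perm (Fin n)) :
    (descSet w).card = (dfilt w).card := by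
  rw [descSet_eq]
  exact Finset.card_image_of_injective _ (fun x y h => Fin.val_injective (by omega))

lemma subset_descSet {n : ℕ} (w : Equiv.Perm (Fin n)) (T : Finset ℕ) :
    descSet w ⊆ T ↔ ∀ i ∈ dfilt w, i.val + 1 ∈ T := by
  rw [descSet_eq, Finset.image_subset_iff]

variable {m : ℕ}

/-- Insertion of a new first value `κ` in front of `v` (order-preserving on old values). -/
def pins (κ : Fin (m + 2)) (v : Equiv.Perm (Fin (m + 1))) : Equiv.Perm (Fin (m + 2)) :=
  (finSuccEquiv' (0 : Fin (m + 2))).trans ((Equiv.optionCongr v).trans (finSuccEquiv' κ).symm)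

lemma pins_zero (κ : Fin (m + 2)) (v : Equiv.Perm (Fin (m + 1))) : pins κ v 0 = κ := by
  simp [pins, finSuccEquiv'_at]

lemma pins_succ (κ : Fin (m + 2)) (v : Equiv.Perm (Fin (m + 1))) (j : Fin (m + 1)) :
    pins κ v j.succ = κ.succAbove (v j) := by
  have h0 : (finSuccEquiv' (0 : Fin (m + 2))) j.succ = some j := by
    rw [← Fin.zero_succAbove j]; exact finSuccEquiv'_succAbove _ _
  simp [pins, h0, finSuccEquiv'_symm_some]

lemma mem_dfilt_iff {n : ℕ} (w : Equiv.Perm (Fin (n + 1))) (i : Fin n) :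
    i ∈ dfilt w ↔ w i.succ < w i.castSucc := by
  simp only [dfilt, Finset.mem_filter, Finset.mem_univ, true_and]
  exact Iff.rfl

lemma dfilt_pins_zero (κ : Fin (m + 2)) (v : Equiv.Perm (Fin (m + 1))) :
    ((0 : Fin (m + 1)) ∈ dfilt (pins κ v)) ↔ (v 0 : ℕ) < (κ : ℕ) := by
  rw [mem_dfilt_iff]
  have hc : Fin.castSucc (0 : Fin (m + 1)) = (0 : Fin (m + 2)) := rfl
  rw [hc, pins_zero, pins_succ]
  rw [Fin.succAbove_lt_iff_castSucc_lt]
  exact Iff.rfl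

lemma dfilt_pins_succ (κ : Fin (m + 2)) (v : Equiv.Perm (Fin (m + 1))) (j : Fin m) :
    (j.succ ∈ dfilt (pins κ v)) ↔ j ∈ dfilt v := by
  rw [mem_dfilt_iff, mem_dfilt_iff, ← Fin.succ_castSucc, pins_succ, pins_succ,
    Fin.succAbove_lt_succAbove_iff]

lemma dfilt_pins (κ : Fin (m + 2)) (v : Equiv.Perm (Fin (m + 1))) :
    dfilt (pins κ v)
      = ((dfilt v).image Fin.succ) ∪ (if (v 0 : ℕ) < (κ : ℕ) then {0} else ∅) := by
  ext i
  induction i using Fin.cases with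
  | zero =>
    simp only [Finset.mem_union, Finset.mem_image, dfilt_pins_zero]
    constructor
    · intro h
      right
      simp [if_pos h]
    · rintro (⟨j, _, hj⟩ | h)
      · exact absurd hj (Fin.succ_ne_zero j)
      · by_cases hc : (v 0 : ℕ) < (κ : ℕ)
        · exact hc
        · simp [if_neg hc] at h
  | succ j =>
    simp only [Finset.mem_union, Finset.mem_image, dfilt_pins_succ]
    constructor
    · intro h; exact Or.inl ⟨j, h, rfl⟩
    · rintro (⟨j', hj', hjj⟩ | h)
      · rwa [← Fin.succ_injective _ hjj]
      · exfalso
        by_cases hc : (v 0 : ℕ) < (κ : ℕ)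
        · simp [if_pos hc] at h
        · simp [if_neg hc] at h

lemma card_dfilt_pins (κ : Fin (m + 2)) (v : Equiv.Perm (Fin (m + 1))) :
    (dfilt (pins κ v)).card
      = (dfilt v).card + (if (v 0 : ℕ) < (κ : ℕ) then 1 else 0) := by
  rw [dfilt_pins]
  rw [Finset.card_union_of_disjoint]
  · rw [Finset.card_image_of_injective _ (Fin.succ_injective _)]
    congr 1
    split_ifs <;> simp
  · rw [Finset.disjoint_right]
    intro x hx
    split_ifs at hx with hc
    · simp only [Finset.mem_singleton] at hx
      subst hx
      simp only [Finset.mem_image]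
      rintro ⟨j, _, hj⟩
      exact Fin.succ_ne_zero j hj
    · simp at hx

def Tshift (T : Finset ℕ) : Finset ℕ := (T.filter (fun t => 2 ≤ t)).image (fun t => t - 1)

lemma mem_Tshift {T : Finset ℕ} {s : ℕ} (hs : 1 ≤ s) : s ∈ Tshift T ↔ s + 1 ∈ T := by
  simp only [Tshift, Finset.mem_image, Finset.mem_filter]
  constructor
  · rintro ⟨t, ⟨ht, h2⟩, hts⟩
    have : t = s + 1 := by omega
    rwa [← this]
  · intro h
    exact ⟨s + 1, ⟨h, by omega⟩, by omega⟩

lemma subset_pins (κ : Fin (m + 2)) (v : Equiv.Perm (Fin (m + 1))) (T : Finset ℕ) :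
    descSet (pins κ v) ⊆ T
      ↔ (descSet v ⊆ Tshift T ∧ ((v 0 : ℕ) < (κ : ℕ) → 1 ∈ T)) := by
  rw [subset_descSet, subset_descSet]
  constructor
  · intro h
    refine ⟨fun j hj => ?_, fun hc => ?_⟩
    · have h2 := h j.succ ((dfilt_pins_succ κ v j).mpr hj)
      rw [mem_Tshift (by omega)]
      simpa [Fin.val_succ] using h2
    · have h2 := h (0 : Fin (m + 1)) ((dfilt_pins_zero κ v).mpr hc)
      simpa using h2
  · rintro ⟨h1, h2⟩ i hi
    induction i using Fin.cases with
    | zero =>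
      have hc := (dfilt_pins_zero κ v).mp hi
      simpa using h2 hc
    | succ j =>
      have hj := (dfilt_pins_succ κ v j).mp hi
      have := h1 j hj
      rw [mem_Tshift (by omega)] at this
      simpa [Fin.val_succ] using this

lemma pins_bijective :
    Function.Bijective (fun p : Fin (m + 2) × Equiv.Perm (Fin (m + 1)) => pins p.1 p.2) := by
  rw [Fintype.bijective_iff_injective_and_card]
  constructor
  · rintro ⟨κ, v⟩ ⟨κ', v'⟩ h
    simp only at h
    have h0 : κ = κ' := by rw [← pins_zero κ v, ← pins_zero κ' v', h]
    subst h0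
    have hv : v = v' := by
      apply Equiv.ext; intro j
      have h1 : (pins κ v) j.succ = (pins κ v') j.succ := by rw [h]
      rw [pins_succ, pins_succ] at h1
      exact Fin.succAbove_right_injective h1
    rw [hv]
  · rw [Fintype.card_prod, Fintype.card_perm, Fintype.card_perm, Fintype.card_fin,
      Fintype.card_fin, Nat.factorial_succ (m + 1)]


lemma card_descSet_pins (κ : Fin (m + 2)) (v : Equiv.Perm (Fin (m + 1))) :
    (descSet (pins κ v)).card = (descSet v).card + (if (v 0 : ℕ) < (κ : ℕ) then 1 else 0) := by
  rw [card_descSet, card_descSet, card_dfilt_pins]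

/-- Refined count: permutations of `S_{n+1}` with first value `k`, descent set inside `T`,
and exactly `j` descents. -/
def Dcnt (n : ℕ) (T : Finset ℕ) (k j : ℕ) : ℕ :=
  (Finset.univ.filter (fun w : Equiv.Perm (Fin (n + 1)) =>
      (w 0 : ℕ) = k ∧ descSet w ⊆ T ∧ (descSet w).card = j)).card

lemma count_partition {n : ℕ} (p : Equiv.Perm (Fin (n + 1)) → Prop) [DecidablePred p] :
    (Finset.univ.filter p).card
      = ∑ i ∈ Finset.range (n + 1),
          (Finset.univ.filter (fun v : Equiv.Perm (Fin (n + 1)) => (v 0 : ℕ) = i ∧ p v)).card := by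
  rw [Finset.card_eq_sum_card_fiberwise
    (f := fun v : Equiv.Perm (Fin (n + 1)) => (v 0 : ℕ)) (t := Finset.range (n + 1))
    (fun v _ => Finset.mem_range.mpr (v 0).isLt)]
  refine Finset.sum_congr rfl fun i _ => ?_
  rw [Finset.filter_filter]
  congr 1
  ext v
  simp only [Finset.mem_filter]
  tauto

lemma fiber_card {n : ℕ} (T' : Finset ℕ) (j i : ℕ) (R : ℕ → Prop) [DecidablePred R] :
    (Finset.univ.filter (fun v : Equiv.Perm (Fin (n + 1)) =>
        (v 0 : ℕ) = i ∧ (R (v 0 : ℕ) ∧ descSet v ⊆ T' ∧ (descSet v).card = j))).card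
      = if R i then Dcnt n T' i j else 0 := by
  by_cases hR : R i
  · rw [if_pos hR]
    unfold Dcnt
    congr 1
    apply Finset.filter_congr
    intro v _
    constructor
    · rintro ⟨h0, _, hs, hc⟩; exact ⟨h0, hs, hc⟩
    · rintro ⟨h0, hs, hc⟩; exact ⟨h0, h0 ▸ hR, hs, hc⟩
  · rw [if_neg hR, Finset.card_eq_zero, Finset.filter_eq_empty_iff]
    rintro v _ ⟨h0, hr, _⟩
    exact hR (h0 ▸ hr)

set_option maxHeartbeats 1000000 in
lemma Dcnt_rec (m : ℕ) (T : Finset ℕ) (k j : ℕ) (hk : k ≤ m + 1) :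
    Dcnt (m + 1) T k j
      = (∑ i ∈ Finset.range (m + 1), if k ≤ i then Dcnt m (Tshift T) i j else 0)
        + (if 1 ∈ T ∧ 1 ≤ j then
            (∑ i ∈ Finset.range (m + 1), if i < k then Dcnt m (Tshift T) i (j - 1) else 0)
          else 0) := by
  -- Step 1: reindex the count by the insertion bijection.
  have step1 : Dcnt (m + 1) T k j
      = (Finset.univ.filter (fun v : Equiv.Perm (Fin (m + 1)) =>
          descSet v ⊆ Tshift T ∧ ((v 0 : ℕ) < k → 1 ∈ T) ∧
          (descSet v).card + (if (v 0 : ℕ) < k then 1 else 0) = j)).card := by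
    unfold Dcnt
    rw [Finset.card_filter, Finset.card_filter]
    rw [← Fintype.sum_bijective _ (pins_bijective (m := m)) _ _ (fun p => rfl)]
    rw [Fintype.sum_prod_type]
    have hκ0 : (⟨k, by omega⟩ : Fin (m + 2)) ∈ (Finset.univ : Finset (Fin (m + 2))) :=
      Finset.mem_univ _
    rw [Finset.sum_eq_single_of_mem (⟨k, by omega⟩ : Fin (m + 2)) hκ0]
    · refine Finset.sum_congr rfl fun v _ => ?_
      congr 1
      rw [eq_iff_iff]
      rw [pins_zero, subset_pins, card_descSet_pins]
      constructor
      · rintro ⟨-, ⟨hsub, himp⟩, hcard⟩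
        exact ⟨hsub, himp, hcard⟩
      · rintro ⟨hsub, himp, hcard⟩
        exact ⟨rfl, ⟨hsub, himp⟩, hcard⟩
    · intro κ _ hκ
      apply Finset.sum_eq_zero
      intro v _
      rw [if_neg]
      rintro ⟨h0, -⟩
      apply hκ
      apply Fin.ext
      rw [pins_zero] at h0
      exact h0
  rw [step1]
  have split := Finset.card_filter_add_card_filter_not
      (s := (Finset.univ.filter (fun v : Equiv.Perm (Fin (m + 1)) =>
        descSet v ⊆ Tshift T ∧ ((v 0 : ℕ) < k → 1 ∈ T) ∧
        (descSet v).card + (if (v 0 : ℕ) < k then 1 else 0) = j)))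
      (p := fun v => (v 0 : ℕ) < k)
  rw [Finset.filter_filter, Finset.filter_filter] at split
  rw [← split]
  have branchA : (Finset.univ.filter (fun v : Equiv.Perm (Fin (m + 1)) =>
      (descSet v ⊆ Tshift T ∧ ((v 0 : ℕ) < k → 1 ∈ T) ∧
        (descSet v).card + (if (v 0 : ℕ) < k then 1 else 0) = j) ∧ ¬ ((v 0 : ℕ) < k))).card
      = ∑ i ∈ Finset.range (m + 1), if k ≤ i then Dcnt m (Tshift T) i j else 0 := by
    have hpred : ∀ v : Equiv.Perm (Fin (m + 1)),
        ((descSet v ⊆ Tshift T ∧ ((v 0 : ℕ) < k → 1 ∈ T) ∧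
          (descSet v).card + (if (v 0 : ℕ) < k then 1 else 0) = j) ∧ ¬ ((v 0 : ℕ) < k))
        ↔ ((k ≤ (v 0 : ℕ)) ∧ descSet v ⊆ Tshift T ∧ (descSet v).card = j) := by
      intro v
      constructor
      · rintro ⟨⟨hsub, himp, hcard⟩, hge⟩
        rw [if_neg hge] at hcard
        exact ⟨not_lt.mp hge, hsub, by omega⟩
      · rintro ⟨hge, hsub, hcard⟩
        have hn : ¬ ((v 0 : ℕ) < k) := not_lt.mpr hge
        exact ⟨⟨hsub, fun hlt => absurd hlt hn, by rw [if_neg hn]; omega⟩, hn⟩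
    rw [Finset.filter_congr (fun v _ => hpred v)]
    rw [count_partition]
    exact Finset.sum_congr rfl fun i _ => fiber_card (Tshift T) j i (fun x => k ≤ x)
  have branchB : (Finset.univ.filter (fun v : Equiv.Perm (Fin (m + 1)) =>
      (descSet v ⊆ Tshift T ∧ ((v 0 : ℕ) < k → 1 ∈ T) ∧
        (descSet v).card + (if (v 0 : ℕ) < k then 1 else 0) = j) ∧ ((v 0 : ℕ) < k))).card
      = (if 1 ∈ T ∧ 1 ≤ j then
          (∑ i ∈ Finset.range (m + 1), if i < k then Dcnt m (Tshift T) i (j - 1) else 0)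
        else 0) := by
    by_cases hTj : 1 ∈ T ∧ 1 ≤ j
    · rw [if_pos hTj]
      have hpred : ∀ v : Equiv.Perm (Fin (m + 1)),
          ((descSet v ⊆ Tshift T ∧ ((v 0 : ℕ) < k → 1 ∈ T) ∧
            (descSet v).card + (if (v 0 : ℕ) < k then 1 else 0) = j) ∧ ((v 0 : ℕ) < k))
          ↔ (((v 0 : ℕ) < k) ∧ descSet v ⊆ Tshift T ∧ (descSet v).card = j - 1) := by
        intro v
        constructor
        · rintro ⟨⟨hsub, himp, hcard⟩, hlt⟩
          rw [if_pos hlt] at hcard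
          exact ⟨hlt, hsub, by omega⟩
        · rintro ⟨hlt, hsub, hcard⟩
          refine ⟨⟨hsub, fun _ => hTj.1, ?_⟩, hlt⟩
          rw [if_pos hlt]
          omega
      rw [Finset.filter_congr (fun v _ => hpred v)]
      rw [count_partition]
      exact Finset.sum_congr rfl fun i _ => fiber_card (Tshift T) (j - 1) i (fun x => x < k)
    · rw [if_neg hTj, Finset.card_eq_zero, Finset.filter_eq_empty_iff]
      rintro v _ ⟨⟨hsub, himp, hcard⟩, hlt⟩
      rw [if_pos hlt] at hcard
      exact hTj ⟨himp hlt, by omega⟩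
  rw [branchA, branchB]
  omega


lemma Dcnt_vanish (n : ℕ) (T : Finset ℕ) (k j : ℕ) (hk : n < k) : Dcnt n T k j = 0 := by
  unfold Dcnt
  rw [Finset.card_eq_zero, Finset.filter_eq_empty_iff]
  rintro w _ ⟨h0, -⟩
  have := (w 0).isLt
  omega

lemma descSet_subsingleton (w : Equiv.Perm (Fin 1)) : descSet w = ∅ := by
  rw [descSet_eq]
  have : dfilt w = ∅ := by
    apply Finset.eq_empty_of_forall_notMem
    intro i
    exact absurd i.isLt (by omega)
  rw [this, Finset.image_empty]

lemma Dcnt_zero (T : Finset ℕ) (k j : ℕ) :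
    Dcnt 0 T k j = if k = 0 ∧ j = 0 then 1 else 0 := by
  unfold Dcnt
  by_cases h : k = 0 ∧ j = 0
  · rw [if_pos h]
    rw [Finset.filter_true_of_mem, Finset.card_univ]
    · rw [Fintype.card_perm, Fintype.card_fin]; rfl
    · intro w _
      refine ⟨?_, ?_, ?_⟩
      · have : (w 0 : ℕ) = 0 := by omega
        rw [this, h.1]
      · rw [descSet_subsingleton w]; exact Finset.empty_subset T
      · rw [descSet_subsingleton w, Finset.card_empty, h.2]
  · rw [if_neg h, Finset.card_eq_zero, Finset.filter_eq_empty_iff]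
    rintro w _ ⟨h0, -, hc⟩
    rw [descSet_subsingleton w, Finset.card_empty] at hc
    have : (w 0 : ℕ) = 0 := by have := (w 0).isLt; omega
    exact h ⟨by omega, hc.symm⟩

/-- The refined counts, extended by `0` to negative descent numbers, as reals. -/
def dz (n : ℕ) (T : Finset ℕ) (k : ℕ) (j : ℤ) : ℝ :=
  if 0 ≤ j then (Dcnt n T k j.toNat : ℝ) else 0

lemma dz_nonneg (n : ℕ) (T : Finset ℕ) (k : ℕ) (j : ℤ) : 0 ≤ dz n T k j := by
  unfold dz; split_ifs
  · positivity
  · exact le_refl 0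

lemma dz_neg (n : ℕ) (T : Finset ℕ) (k : ℕ) {j : ℤ} (hj : j < 0) : dz n T k j = 0 := by
  unfold dz; rw [if_neg (by omega)]

lemma dz_vanish (n : ℕ) (T : Finset ℕ) (k : ℕ) (j : ℤ) (hk : n < k) : dz n T k j = 0 := by
  unfold dz; split_ifs
  · rw [Dcnt_vanish n T k _ hk]; norm_num
  · rfl

lemma dz_rec_point (m : ℕ) (T : Finset ℕ) (k i : ℕ) (j : ℤ) (hj : 0 ≤ j) :
    (if k ≤ i then ((Dcnt m (Tshift T) i j.toNat : ℝ)) else 0)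
      + (if 1 ∈ T ∧ 1 ≤ j.toNat then
          (if i < k then ((Dcnt m (Tshift T) i (j.toNat - 1) : ℝ)) else 0) else 0)
    = if k ≤ i then dz m (Tshift T) i j
      else (if 1 ∈ T then (1:ℝ) else 0) * dz m (Tshift T) i (j - 1) := by
  by_cases hki : k ≤ i
  · simp only [if_pos hki, if_neg (by omega : ¬ i < k), ite_self, add_zero]
    unfold dz
    rw [if_pos hj]
  · simp only [if_neg hki, zero_add]
    rcases Nat.eq_zero_or_pos j.toNat with hj0 | hj1
    · have hj' : j = 0 := by omega
      subst hj'
      rw [if_neg (fun hcon : 1 ∈ T ∧ 1 ≤ (0:ℤ).toNat => by simpa using hcon.2)]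
      rw [dz_neg _ _ _ (by omega : (0:ℤ) - 1 < 0)]
      ring
    · have hjj : (0:ℤ) ≤ j - 1 := by omega
      have hjt : (j - 1).toNat = j.toNat - 1 := by omega
      rw [show dz m (Tshift T) i (j - 1) = ((Dcnt m (Tshift T) i (j.toNat - 1) : ℝ)) from by
        unfold dz; rw [if_pos hjj, hjt]]
      by_cases hT : 1 ∈ T
      · rw [if_pos (⟨hT, hj1⟩ : 1 ∈ T ∧ 1 ≤ j.toNat), if_pos (by omega : i < k), if_pos hT,
          one_mul]
      · rw [if_neg (fun hcon : 1 ∈ T ∧ 1 ≤ j.toNat => hT hcon.1), if_neg hT, zero_mul]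

lemma dz_rec (m : ℕ) (T : Finset ℕ) (k : ℕ) (hk : k ≤ m + 1) (j : ℤ) :
    dz (m + 1) T k j = Gop (dz m (Tshift T)) (if 1 ∈ T then 1 else 0) (m + 1) k j := by
  unfold Gop W
  rcases lt_or_ge j 0 with hj | hj
  · rw [dz_neg _ _ _ hj]
    symm
    apply Finset.sum_eq_zero
    intro i _
    have h1 : dz m (Tshift T) i j = 0 := dz_neg _ _ _ hj
    have h2 : dz m (Tshift T) i (j - 1) = 0 := dz_neg _ _ _ (by omega)
    rw [h1, h2]
    split_ifs <;> ring
  · have lhs : dz (m + 1) T k j = ((Dcnt (m + 1) T k j.toNat : ℕ) : ℝ) := by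
      unfold dz; rw [if_pos hj]
    rw [lhs, Dcnt_rec m T k j.toNat hk]
    have step : (((if 1 ∈ T ∧ 1 ≤ j.toNat then
          (∑ i ∈ Finset.range (m + 1), if i < k then Dcnt m (Tshift T) i (j.toNat - 1) else 0)
        else 0) : ℕ) : ℝ)
        = ∑ i ∈ Finset.range (m + 1),
            (if 1 ∈ T ∧ 1 ≤ j.toNat then
              (if i < k then (Dcnt m (Tshift T) i (j.toNat - 1) : ℝ) else 0) else 0) := by
      split_ifs with hc
      · push_cast; rfl
      · rw [Finset.sum_const_zero, Nat.cast_zero]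
    rw [Nat.cast_add, step]
    rw [show ((((∑ i ∈ Finset.range (m + 1), if k ≤ i then Dcnt m (Tshift T) i j.toNat else 0) : ℕ)) : ℝ)
        = ∑ i ∈ Finset.range (m + 1),
            (if k ≤ i then ((Dcnt m (Tshift T) i j.toNat : ℝ)) else 0) from by push_cast; rfl]
    rw [← Finset.sum_add_distrib]
    exact Finset.sum_congr rfl fun i _ => dz_rec_point m T k i j hj

/-- The master invariant: strong two-row log-concavity I1 and the TP2 condition I2. -/
lemma master (n : ℕ) : ∀ T : Finset ℕ,
    (∀ k l : ℕ, ∀ a b : ℤ, a + 1 ≤ b →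
      dz n T k a * dz n T l (b + 1) ≤ dz n T k (a + 1) * dz n T l b) ∧
    (∀ k l : ℕ, k ≤ l → ∀ j : ℤ,
      dz n T k (j + 1) * dz n T l j ≤ dz n T k j * dz n T l (j + 1)) := by
  induction n with
  | zero =>
    intro T
    constructor
    · intro k l a b hab
      have hz : dz 0 T k a * dz 0 T l (b + 1) = 0 := by
        rcases lt_or_ge a 0 with ha | ha
        · rw [dz_neg _ _ _ ha]; ring
        · have : dz 0 T l (b + 1) = 0 := by
            unfold dz
            rw [if_pos (by omega), Dcnt_zero, if_neg (by omega)]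
            norm_num
          rw [this]; ring
      rw [hz]
      exact mul_nonneg (dz_nonneg _ _ _ _) (dz_nonneg _ _ _ _)
    · intro k l hkl j
      have hz : dz 0 T k (j + 1) * dz 0 T l j = 0 := by
        rcases lt_or_ge j 0 with hj | hj
        · rw [dz_neg _ _ _ hj]; ring
        · have : dz 0 T k (j + 1) = 0 := by
            unfold dz
            rw [if_pos (by omega), Dcnt_zero, if_neg (by omega)]
            norm_num
          rw [this]; ring
      rw [hz]
      exact mul_nonneg (dz_nonneg _ _ _ _) (dz_nonneg _ _ _ _)
  | succ m IH =>
    intro T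
    have hε : (0:ℝ) ≤ (if 1 ∈ T then 1 else 0) := by split_ifs <;> norm_num
    have hI1 : ∀ k l, k < m + 1 → l < m + 1 → ∀ a b : ℤ, a + 1 ≤ b →
        dz m (Tshift T) k a * dz m (Tshift T) l (b + 1)
          ≤ dz m (Tshift T) k (a + 1) * dz m (Tshift T) l b :=
      fun k l _ _ => (IH (Tshift T)).1 k l
    have hI2 : ∀ k l, k < m + 1 → l < m + 1 → k ≤ l → ∀ j : ℤ,
        dz m (Tshift T) k (j + 1) * dz m (Tshift T) l j
          ≤ dz m (Tshift T) k j * dz m (Tshift T) l (j + 1) :=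
      fun k l _ _ hkl => (IH (Tshift T)).2 k l hkl
    constructor
    · intro k l a b hab
      by_cases hk : k ≤ m + 1
      · by_cases hl : l ≤ m + 1
        · simp only [dz_rec m T k hk, dz_rec m T l hl]
          exact closure1 _ _ _ hε hI1 hI2 k l a b hab
        · rw [dz_vanish _ _ _ _ (by omega : m + 1 < l)]
          rw [mul_zero]
          exact mul_nonneg (dz_nonneg _ _ _ _) (dz_nonneg _ _ _ _)
      · rw [dz_vanish _ _ _ _ (by omega : m + 1 < k)]
        rw [zero_mul]
        exact mul_nonneg (dz_nonneg _ _ _ _) (dz_nonneg _ _ _ _)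
    · intro k l hkl j
      by_cases hl : l ≤ m + 1
      · have hk : k ≤ m + 1 := hkl.trans hl
        simp only [dz_rec m T k hk, dz_rec m T l hl]
        exact closure2 _ _ _ hε hI1 hI2 k l hkl j
      · rw [dz_vanish _ _ l _ (by omega : m + 1 < l)]
        rw [mul_zero]
        exact mul_nonneg (dz_nonneg _ _ _ _) (dz_nonneg _ _ _ _)

lemma descSet_one {n : ℕ} : descSet (1 : Equiv.Perm (Fin n)) = ∅ := by
  rw [descSet_eq]
  have : dfilt (1 : Equiv.Perm (Fin n)) = ∅ := by
    apply Finset.eq_empty_of_forall_notMem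
    intro i hi
    simp only [dfilt, Finset.mem_filter, Finset.mem_univ, true_and, Equiv.Perm.one_apply,
      Fin.mk_lt_mk] at hi
    omega
  rw [this, Finset.image_empty]

lemma coeff_Apoly (m : ℕ) (T : Finset ℕ) (j : ℕ) :
    (Apoly (m + 1) T).coeff j
      = ((Finset.univ.filter (fun w : Equiv.Perm (Fin (m + 1)) =>
          descSet w ⊆ T ∧ (descSet w).card = j)).card : ℝ) := by
  unfold Apoly
  rw [Polynomial.finset_sum_coeff]
  rw [Finset.sum_congr rfl (fun w _ => Polynomial.coeff_X_pow _ _)]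
  rw [Finset.sum_boole, Finset.filter_filter]
  congr 2
  apply Finset.filter_congr
  intro w _
  tauto

lemma coeff_dz (m : ℕ) (T : Finset ℕ) (j : ℕ) :
    (Apoly (m + 1) T).coeff j = ∑ k ∈ Finset.range (m + 1), dz m T k (j : ℤ) := by
  rw [coeff_Apoly]
  rw [count_partition (p := fun w : Equiv.Perm (Fin (m + 1)) =>
    descSet w ⊆ T ∧ (descSet w).card = j)]
  push_cast
  refine Finset.sum_congr rfl fun k _ => ?_
  unfold dz
  rw [if_pos (by positivity : (0:ℤ) ≤ (j:ℤ)), Int.toNat_natCast]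
  rfl

lemma coeff_nonneg (m : ℕ) (T : Finset ℕ) (j : ℕ) : 0 ≤ (Apoly (m + 1) T).coeff j := by
  rw [coeff_Apoly]; positivity

lemma coeff_zero_pos (m : ℕ) (T : Finset ℕ) : 0 < (Apoly (m + 1) T).coeff 0 := by
  rw [coeff_Apoly]
  have : (1 : Equiv.Perm (Fin (m + 1))) ∈ Finset.univ.filter
      (fun w : Equiv.Perm (Fin (m + 1)) => descSet w ⊆ T ∧ (descSet w).card = 0) := by
    simp only [Finset.mem_filter, Finset.mem_univ, true_and, descSet_one]
    exact ⟨Finset.empty_subset T, Finset.card_empty⟩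
  have := Finset.card_pos.mpr ⟨1, this⟩
  exact_mod_cast this

lemma coeff_top (m : ℕ) (T : Finset ℕ) (j : ℕ) (hj : m + 1 ≤ j) :
    (Apoly (m + 1) T).coeff j = 0 := by
  rw [coeff_Apoly]
  rw [Finset.card_eq_zero.mpr, Nat.cast_zero]
  rw [Finset.filter_eq_empty_iff]
  rintro w _ ⟨-, hcard⟩
  have h1 : (dfilt w).card ≤ m := by
    have h2 := Finset.card_le_univ (dfilt w)
    have h3 : Fintype.card (Fin (m + 1 - 1)) = m := by simp
    rw [h3] at h2
    exact h2
  rw [card_descSet] at hcard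
  omega

lemma coeff_S4 (m : ℕ) (T : Finset ℕ) (a b : ℕ) (hab : a + 1 ≤ b) :
    (Apoly (m + 1) T).coeff a * (Apoly (m + 1) T).coeff (b + 1)
      ≤ (Apoly (m + 1) T).coeff (a + 1) * (Apoly (m + 1) T).coeff b := by
  rw [coeff_dz, coeff_dz, coeff_dz, coeff_dz]
  rw [Finset.sum_mul_sum, Finset.sum_mul_sum]
  push_cast
  refine Finset.sum_le_sum fun k _ => Finset.sum_le_sum fun l _ => ?_
  exact (master m T).1 k l (a : ℤ) (b : ℤ) (by exact_mod_cast hab)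

end Stmt5Aux

/-- For every positive integer `n` and every `T ⊆ [n-1]`, the polynomial
`A^T_n(x)` is log-concave and unimodal. -/
theorem stmt5 (n : ℕ) (hn : 0 < n) (T : Finset ℕ) (hT : T ⊆ Finset.Icc 1 (n - 1)) :
    CoeffLogConcave (Apoly n T) ∧ CoeffUnimodal (Apoly n T) := by
  obtain ⟨m, rfl⟩ : ∃ m, n = m + 1 := ⟨n - 1, by omega⟩
  have S0 : ∀ j, 0 ≤ (Apoly (m + 1) T).coeff j := Stmt5Aux.coeff_nonneg m T
  have S4 : ∀ a b : ℕ, a + 1 ≤ b →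
      (Apoly (m + 1) T).coeff a * (Apoly (m + 1) T).coeff (b + 1)
        ≤ (Apoly (m + 1) T).coeff (a + 1) * (Apoly (m + 1) T).coeff b := Stmt5Aux.coeff_S4 m T
  have S2 : 0 < (Apoly (m + 1) T).coeff 0 := Stmt5Aux.coeff_zero_pos m T
  have S3 : ∀ j, m + 1 ≤ j → (Apoly (m + 1) T).coeff j = 0 := Stmt5Aux.coeff_top m T
  -- interval support
  have ISL : ∀ g : ℕ, ∀ a c : ℕ, c - a ≤ g → a < c →
      0 < (Apoly (m + 1) T).coeff a → 0 < (Apoly (m + 1) T).coeff c →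
      ∀ b, a < b → b < c → 0 < (Apoly (m + 1) T).coeff b := by
    intro g
    induction g with
    | zero => intro a c hg hac _ _ b hab hbc; omega
    | succ g IH =>
      intro a c hg hac ha hc b hab hbc
      have h4 := S4 a (c - 1) (by omega)
      rw [show c - 1 + 1 = c by omega] at h4
      have hac' : 0 < (Apoly (m + 1) T).coeff a * (Apoly (m + 1) T).coeff c := mul_pos ha hc
      have hmid : 0 < (Apoly (m + 1) T).coeff (a + 1) * (Apoly (m + 1) T).coeff (c - 1) :=
        lt_of_lt_of_le hac' h4
      have ha1 : 0 < (Apoly (m + 1) T).coeff (a + 1) := by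
        nlinarith [S0 (a + 1), S0 (c - 1)]
      have hc1 : 0 < (Apoly (m + 1) T).coeff (c - 1) := by
        nlinarith [S0 (a + 1), S0 (c - 1)]
      by_cases hb1 : b = a + 1
      · exact hb1 ▸ ha1
      · by_cases hb2 : b = c - 1
        · exact hb2 ▸ hc1
        · exact IH (a + 1) (c - 1) (by omega) (by omega) ha1 hc1 b (by omega) (by omega)
  have ISL' : ∀ a b c : ℕ, a < b → b < c →
      0 < (Apoly (m + 1) T).coeff a → 0 < (Apoly (m + 1) T).coeff c →
      0 < (Apoly (m + 1) T).coeff b :=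
    fun a b c hab hbc ha hc => ISL (c - a) a c le_rfl (by omega) ha hc b hab hbc
  constructor
  · -- log-concavity
    intro i hi
    have h4 := S4 (i - 1) i (by omega)
    rw [show i - 1 + 1 = i by omega] at h4
    calc (Apoly (m + 1) T).coeff (i - 1) * (Apoly (m + 1) T).coeff (i + 1)
        ≤ (Apoly (m + 1) T).coeff i * (Apoly (m + 1) T).coeff i := h4
      _ = (Apoly (m + 1) T).coeff i ^ 2 := (sq _).symm
  · -- unimodality
    have hex : ∃ jj : ℕ, (Apoly (m + 1) T).coeff (jj + 1) ≤ (Apoly (m + 1) T).coeff jj :=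
      ⟨m + 1, by rw [S3 (m + 1) le_rfl, S3 (m + 1 + 1) (by omega)]⟩
    refine ⟨Nat.find hex, ?_, ?_⟩
    · intro i hiK
      have := Nat.find_min hex hiK
      exact le_of_lt (lt_of_not_ge this)
    · intro i hKi
      induction i, hKi using Nat.le_induction with
      | base => exact Nat.find_spec hex
      | succ i hKi IH =>
        by_cases hz : (Apoly (m + 1) T).coeff (i + 1) ≤ 0
        · have hz0 : (Apoly (m + 1) T).coeff (i + 1) = 0 := le_antisymm hz (S0 _)
          by_contra hcon
          push_neg at hcon
          have hpos : 0 < (Apoly (m + 1) T).coeff (i + 1 + 1) := by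
            rw [hz0] at hcon
            exact hcon
          have hmid := ISL' 0 (i + 1) (i + 1 + 1) (by omega) (by omega) S2 hpos
          rw [hz0] at hmid
          exact lt_irrefl 0 hmid
        · push_neg at hz
          have hpos_i : 0 < (Apoly (m + 1) T).coeff i := lt_of_lt_of_le hz IH
          have h4 := S4 i (i + 1) (by omega)
          have hsq : (Apoly (m + 1) T).coeff (i + 1) * (Apoly (m + 1) T).coeff (i + 1)
              ≤ (Apoly (m + 1) T).coeff (i + 1) * (Apoly (m + 1) T).coeff i :=
            mul_le_mul_of_nonneg_left IH (S0 _)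
          have hfin : (Apoly (m + 1) T).coeff i * (Apoly (m + 1) T).coeff (i + 1 + 1)
              ≤ (Apoly (m + 1) T).coeff i * (Apoly (m + 1) T).coeff (i + 1) := by nlinarith
          exact le_of_mul_le_mul_left hfin hpos_i
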